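/- (Šmigoc's complex Suleimanova theorem) Let Λ = (λ_1, λ_2, …, λ_n) be a list of complex numbers that is closed under complex conjugation, with λ_1 real, and such that for every i ≥ 2 one has Re(λ_i) ≤ 0 and |Im(λ_i)| ≤ √3·|Re(λ_i)|. Then Λ is realizable if and only if ∑_{i=1}^n λ_i ≥ 0 (this sum is real since Λ is closed under conjugation). -/
import Mathlib


open Polynomial Matrix Finset


def companionMat {R : Type*} [CommRing R] (n : ℕ) (a : Fin n → R) : Matrix (Fin n) (Fin n) R :=
  Matrix.of fun i j => if (i : ℕ) = (j : ℕ) + 1 then 1 else if (j : ℕ) = n - 1 then a i else 0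

theorem companionMat_charpoly {R : Type*} [CommRing R] :
    ∀ (n : ℕ) (a : Fin n → R),
      (companionMat n a).charpoly = X ^ n - ∑ j : Fin n, C (a j) * X ^ (j : ℕ) := by
  intro n
  induction n with
  | zero =>
    intro a
    simp [Matrix.charpoly, Matrix.det_isEmpty]
  | succ m ih =>
    intro a
    match m with
    | 0 =>
      rw [Matrix.charpoly, Matrix.det_fin_one]
      simp [companionMat, charmatrix_apply]
    | Nat.succ k =>
      set M := charmatrix (companionMat (k+2) a) with hM
      have hexp : (companionMat (k+2) a).charpoly
          = ∑ j : Fin (k+2), (-1) ^ (j : ℕ) * M 0 j * det (M.submatrix Fin.succ j.succAbove) := by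
        rw [Matrix.charpoly, det_succ_row_zero]
      -- row 0 entries
      have h00 : M 0 0 = X := by
        rw [hM, charmatrix_apply_eq]
        simp [companionMat]
      have h0last : M 0 (Fin.last (k+1)) = -C (a 0) := by
        rw [hM, charmatrix_apply_ne _ _ _ (by simp [Fin.ext_iff])]
        simp [companionMat, Fin.val_last]
      have h0mid : ∀ j : Fin (k+2), j ≠ 0 → j ≠ Fin.last (k+1) → M 0 j = 0 := by
        intro j hj0 hjl
        rw [hM, charmatrix_apply_ne _ _ _ (fun h => hj0 h.symm)]
        have : (j : ℕ) ≠ k + 1 := by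
          intro h; exact hjl (Fin.ext (by simpa [Fin.val_last] using h))
        simp [companionMat, this]
      -- minor at (0,0)
      have hminor0 : M.submatrix Fin.succ ((0 : Fin (k+2)).succAbove)
          = charmatrix (companionMat (k+1) (a ∘ Fin.succ)) := by
        ext i j
        rcases eq_or_ne i j with rfl | hij
        · simp only [Matrix.submatrix_apply, Fin.succAbove_zero, hM, charmatrix_apply_eq]
          simp [companionMat, Fin.val_succ]
        · have : (Fin.succ i) ≠ (Fin.succ j) := fun h => hij (Fin.succ_injective _ h)
          simp only [Matrix.submatrix_apply, Fin.succAbove_zero, hM,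
            charmatrix_apply_ne _ _ _ this, charmatrix_apply_ne _ _ _ hij]
          simp [companionMat, Fin.val_succ]
      -- minor at (0, last) is upper triangular with -1 diagonal
      have hminorlast : det (M.submatrix Fin.succ ((Fin.last (k+1)).succAbove)) = (-1)^(k+1) := by
        have htri : (M.submatrix Fin.succ ((Fin.last (k+1)).succAbove)).BlockTriangular id := by
          intro i j hji
          simp only [id_eq] at hji
          have h1 : (Fin.succ i) ≠ (Fin.last (k+1)).succAbove j := by
            rw [Fin.succAbove_last]
            intro h
            have := congrArg Fin.val h
            simp [Fin.val_succ] at this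
            omega
          simp only [Matrix.submatrix_apply, hM, charmatrix_apply_ne _ _ _ h1]
          have h2 : ((Fin.succ i : Fin (k+2)) : ℕ) ≠ ((Fin.last (k+1)).succAbove j : ℕ) + 1 := by
            rw [Fin.succAbove_last]
            simp only [Fin.val_succ, Fin.coe_castSucc]
            intro h
            have hj := j.isLt
            have hi := i.isLt
            omega
          have h3 : (((Fin.last (k+1)).succAbove j : Fin (k+2)) : ℕ) ≠ (k+2) - 1 := by
            rw [Fin.succAbove_last]
            simp only [Fin.coe_castSucc]
            have := j.isLt; omega
          simp only [companionMat, Matrix.of_apply, if_neg h2, if_neg h3, map_zero, neg_zero]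
        rw [Matrix.det_of_upperTriangular htri]
        have hdiag : ∀ i : Fin (k+1),
            (M.submatrix Fin.succ ((Fin.last (k+1)).succAbove)) i i = -1 := by
          intro i
          have h1 : (Fin.succ i) ≠ (Fin.last (k+1)).succAbove i := by
            rw [Fin.succAbove_last]
            intro h; have := congrArg Fin.val h; simp [Fin.val_succ] at this
          simp only [Matrix.submatrix_apply, hM, charmatrix_apply_ne _ _ _ h1]
          have h2 : ((Fin.succ i : Fin (k+2)) : ℕ) = (((Fin.last (k+1)).succAbove i : Fin (k+2)) : ℕ) + 1 := by
            rw [Fin.succAbove_last]; simp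
          simp [companionMat, h2]
        simp only [hdiag]
        simp
      -- assemble the sum
      have hsum : (companionMat (k+2) a).charpoly
          = X * det (M.submatrix Fin.succ ((0:Fin (k+2)).succAbove)) - C (a 0) := by
        rw [hexp]
        rw [← Finset.add_sum_erase _ _ (Finset.mem_univ (0 : Fin (k+2)))]
        rw [Finset.sum_eq_single_of_mem (Fin.last (k+1))
          (Finset.mem_erase.mpr ⟨by simp [Fin.ext_iff], Finset.mem_univ _⟩)]
        · rw [h00, h0last, hminorlast]
          have he : ((-1:R[X])^(k+1)) * ((-1:R[X])^(k+1)) = 1 := by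
            rw [← pow_add]; exact Even.neg_one_pow ⟨k+1, by ring⟩
          simp only [Fin.val_zero, pow_zero, one_mul, Fin.val_last]
          linear_combination (-(C (a 0))) * he
        · intro j hj hjl
          rw [h0mid j (Finset.mem_erase.mp hj).1 hjl]
          ring
      rw [hsum, hminor0, ← Matrix.charpoly, ih (a ∘ Fin.succ), mul_sub, Finset.mul_sum]
      rw [Fin.sum_univ_succ (f := fun j : Fin (k+2) => C (a j) * X ^ (j:ℕ))]
      have hs : (∑ j : Fin (k+1), X * (C ((a ∘ Fin.succ) j) * X ^ (j:ℕ)))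
          = ∑ j : Fin (k+1), C (a (Fin.succ j)) * X ^ ((j:ℕ)+1) :=
        Finset.sum_congr rfl fun j _ => by simp only [Function.comp_apply]; ring
      rw [hs]
      simp only [Fin.val_zero, pow_zero, mul_one, Fin.val_succ]
      ring

set_option maxHeartbeats 1000000 in
lemma smigoc_key : ∀ (S : Multiset ℂ),
    S.map (starRingEnd ℂ) = S →
    (∀ z ∈ S, z.re ≤ 0 ∧ |z.im| ≤ Real.sqrt 3 * |z.re|) →
    ∃ q : Polynomial ℝ, q.Monic ∧ q.natDegree = Multiset.card S ∧
      q.map (Complex.ofRealHom) = (S.map (fun z => X - C z)).prod ∧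
      (∀ j, 0 ≤ q.coeff j) ∧
      (∀ j, j + 1 ≤ Multiset.card S →
        q.coeff j ≤ (-(S.map Complex.re).sum) * q.coeff (j+1)) := by
  intro S
  induction S using Multiset.strongInductionOn with
  | _ S IH =>
  intro hconj hsec
  rcases eq_or_ne S 0 with rfl | hS0
  · refine ⟨1, monic_one, by simp, by simp, fun j => by
      rw [Polynomial.coeff_one]; split_ifs <;> norm_num,
      fun j hj => by rw [Multiset.card_zero] at hj; omega⟩
  obtain ⟨z, hz⟩ := Multiset.exists_mem_of_ne_zero hS0
  have hinj : Function.Injective (starRingEnd ℂ) := star_injective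
  have hzsec := hsec z hz
  -- sum of re over a sub-multiset is nonpositive
  have csum_nonneg : ∀ T : Multiset ℂ, (∀ x ∈ T, x.re ≤ 0) → 0 ≤ -(T.map Complex.re).sum := by
    intro T
    induction T using Multiset.induction_on with
    | empty => intro _; simp
    | cons a s ihs =>
      intro hT
      rw [Multiset.map_cons, Multiset.sum_cons, neg_add]
      have h1 := hT a (Multiset.mem_cons_self a s)
      have h2 := ihs (fun x hx => hT x (Multiset.mem_cons_of_mem hx))
      linarith
  by_cases him : z.im = 0
  · -- real root case
    set S' := S.erase z with hS'
    have hzS : S = z ::ₘ S' := (Multiset.cons_erase hz).symm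
    have hc' : S'.map (starRingEnd ℂ) = S' := by
      rw [hS', Multiset.map_erase _ hinj, hconj, Complex.conj_eq_iff_im.mpr him]
    have hsec' : ∀ x ∈ S', x.re ≤ 0 ∧ |x.im| ≤ Real.sqrt 3 * |x.re| :=
      fun x hx => hsec x (Multiset.mem_of_mem_erase hx)
    obtain ⟨q', hmon, hdeg, hmap, hpos, hrec⟩ := IH S' (Multiset.erase_lt.mpr hz) hc' hsec'
    set m : ℝ := -z.re with hm
    have hm0 : 0 ≤ m := by rw [hm]; linarith [hzsec.1]
    have hc'0 : 0 ≤ -(S'.map Complex.re).sum := csum_nonneg S' fun x hx => (hsec' x hx).1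
    set c' : ℝ := -(S'.map Complex.re).sum with hcc'
    refine ⟨(X - C z.re) * q', (monic_X_sub_C _).mul hmon, ?_, ?_, ?_, ?_⟩
    · rw [(monic_X_sub_C _).natDegree_mul hmon, natDegree_X_sub_C, hdeg, hzS,
        Multiset.card_cons]; omega
    · rw [Polynomial.map_mul, Polynomial.map_sub, map_X, map_C, hmap, hzS,
        Multiset.map_cons, Multiset.prod_cons]
      have hzz : Complex.ofRealHom z.re = z := by
        apply Complex.ext <;> simp [him]
      rw [hzz]
    · have hqe : (X - C z.re) * q' = q' * X ^ 1 + C m * q' := by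
        rw [hm, map_neg]; ring
      intro j
      rw [hqe, coeff_add, coeff_mul_X_pow', coeff_C_mul]
      have := hpos j
      split_ifs with h
      · have := hpos (j - 1)
        nlinarith
      · nlinarith
    · have hqe : (X - C z.re) * q' = q' * X ^ 1 + C m * q' := by
        rw [hm, map_neg]; ring
      intro j hj
      have hcS : -(S.map Complex.re).sum = m + c' := by
        rw [hzS, Multiset.map_cons, Multiset.sum_cons, hcc', hm]; ring
      have hcard : Multiset.card S = Multiset.card S' + 1 := by
        rw [hzS, Multiset.card_cons]
      rw [hcS, hqe]
      rcases j with _ | k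
      · simp only [coeff_add, coeff_mul_X_pow', coeff_C_mul]
        norm_num
        nlinarith [hpos 0, hpos 1, mul_nonneg hc'0 (hpos 0),
          mul_nonneg (mul_nonneg (add_nonneg hm0 hc'0) hm0) (hpos 1)]
      · simp only [coeff_add, coeff_mul_X_pow', coeff_C_mul]
        have h1 : 1 ≤ k + 1 := by omega
        have h2 : 1 ≤ k + 2 := by omega
        rw [if_pos h1, if_pos h2]
        simp only [Nat.add_sub_cancel]
        have hr := hrec k (by omega)
        nlinarith [hr, hpos (k+1), hpos (k+2),
          mul_nonneg (mul_nonneg (add_nonneg hm0 hc'0) hm0) (hpos (k+2))]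
  · -- complex conjugate pair case
    set w := starRingEnd ℂ z with hw
    have hwz : w ≠ z := fun h => him (Complex.conj_eq_iff_im.mp h)
    have hwS : w ∈ S := by rw [← hconj]; exact Multiset.mem_map_of_mem _ hz
    have hwS' : w ∈ S.erase z := (Multiset.mem_erase_of_ne hwz).mpr hwS
    set S'' := (S.erase z).erase w with hS''
    have hstep1 : S.erase z = w ::ₘ S'' := (Multiset.cons_erase hwS').symm
    have hzS : S = z ::ₘ w ::ₘ S'' := by rw [← hstep1, Multiset.cons_erase hz]
    have hlt : S'' < S := lt_trans (Multiset.erase_lt.mpr hwS') (Multiset.erase_lt.mpr hz)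
    have hww : starRingEnd ℂ w = z := by rw [hw]; exact Complex.conj_conj z
    have hc'' : S''.map (starRingEnd ℂ) = S'' := by
      rw [hS'', Multiset.map_erase _ hinj, Multiset.map_erase _ hinj, hconj, hww, ← hw]
      exact Multiset.erase_comm S w z
    have hsec'' : ∀ x ∈ S'', x.re ≤ 0 ∧ |x.im| ≤ Real.sqrt 3 * |x.re| :=
      fun x hx => hsec x (Multiset.mem_of_mem_erase (Multiset.mem_of_mem_erase hx))
    obtain ⟨q', hmon, hdeg, hmap, hpos, hrec⟩ := IH S'' hlt hc'' hsec''
    have hc''0 : 0 ≤ -(S''.map Complex.re).sum := csum_nonneg S'' fun x hx => (hsec'' x hx).1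
    set c'' : ℝ := -(S''.map Complex.re).sum with hcc''
    set pp : ℝ := -(2 * z.re) with hppdef
    set r : ℝ := z.re ^ 2 + z.im ^ 2 with hrdef
    have hpp : 0 ≤ pp := by rw [hppdef]; linarith [hzsec.1]
    have hr0 : 0 ≤ r := by positivity
    have him3 : z.im ^ 2 ≤ 3 * z.re ^ 2 := by
      have h := hzsec.2
      have h2 := mul_self_le_mul_self (abs_nonneg z.im) h
      rw [abs_mul_abs_self] at h2
      have hs3 : Real.sqrt 3 * |z.re| * (Real.sqrt 3 * |z.re|) = 3 * (z.re * z.re) := by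
        rw [mul_mul_mul_comm, Real.mul_self_sqrt (by norm_num), abs_mul_abs_self]
      nlinarith [h2]
    have hrpp : r ≤ pp * pp := by rw [hrdef, hppdef]; nlinarith
    set f : Polynomial ℝ := X ^ 2 + (C pp * X + C r) with hf
    have hflin : (C pp * X + C r).degree < ((2 : ℕ) : WithBot ℕ) :=
      lt_of_le_of_lt (degree_linear_le) (by norm_num)
    have hfmon : f.Monic := monic_X_pow_add hflin
    have hfdeg : f.natDegree = 2 := by
      have hd : f.degree = (2 : ℕ) := by
        rw [hf, degree_add_eq_left_of_degree_lt (by rwa [degree_X_pow]), degree_X_pow]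
      exact natDegree_eq_of_degree_eq_some hd
    have hfmap : f.map Complex.ofRealHom = (X - C z) * (X - C w) := by
      have hsum : (Complex.ofRealHom pp) = -(z + w) := by
        rw [hppdef, hw, Complex.add_conj]
        simp
      have hprod : (Complex.ofRealHom r) = z * w := by
        rw [hrdef, hw, Complex.mul_conj]
        simp [Complex.normSq_apply]
        ring
      rw [hf]
      simp only [Polynomial.map_add, Polynomial.map_mul, Polynomial.map_pow, map_X, map_C,
        hsum, hprod]
      simp only [map_neg, map_add, Polynomial.C_mul]
      ring
    have hqc : ∀ jj, (f * q').coeff jj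
        = (if 2 ≤ jj then q'.coeff (jj - 2) else 0)
          + (pp * (if 1 ≤ jj then q'.coeff (jj - 1) else 0) + r * q'.coeff jj) := by
      intro jj
      have hfe : f * q' = q' * X ^ 2 + (C pp * (q' * X ^ 1) + C r * q') := by rw [hf]; ring
      rw [hfe, coeff_add, coeff_add, coeff_mul_X_pow', coeff_C_mul, coeff_C_mul,
        coeff_mul_X_pow']
    refine ⟨f * q', hfmon.mul hmon, ?_, ?_, ?_, ?_⟩
    · rw [hfmon.natDegree_mul hmon, hfdeg, hdeg, hzS]
      simp [Multiset.card_cons]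
      ring
    · rw [Polynomial.map_mul, hfmap, hmap, hzS]
      simp only [Multiset.map_cons, Multiset.prod_cons]
      ring
    · intro j
      rw [hqc j]
      have hA : (0:ℝ) ≤ if 2 ≤ j then q'.coeff (j - 2) else 0 := by
        split_ifs; exacts [hpos _, le_rfl]
      have hB : (0:ℝ) ≤ if 1 ≤ j then q'.coeff (j - 1) else 0 := by
        split_ifs; exacts [hpos _, le_rfl]
      exact add_nonneg hA (add_nonneg (mul_nonneg hpp hB) (mul_nonneg hr0 (hpos j)))
    · intro j hj
      have hcS : -(S.map Complex.re).sum = pp + c'' := by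
        rw [hzS]
        simp only [Multiset.map_cons, Multiset.sum_cons, hcc'', hppdef]
        have : w.re = z.re := by rw [hw, Complex.conj_re]
        rw [this]; ring
      have hcard : Multiset.card S = Multiset.card S'' + 2 := by
        rw [hzS]; simp [Multiset.card_cons]
      rw [hcS, hqc j, hqc (j+1)]
      rcases j with _ | j
      · norm_num
        nlinarith [mul_le_mul_of_nonneg_right hrpp (hpos 0),
          mul_nonneg (mul_nonneg hc''0 hpp) (hpos 0),
          mul_nonneg (mul_nonneg (add_nonneg hpp hc''0) hr0) (hpos 1)]
      rcases j with _ | k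
      · norm_num
        nlinarith [mul_le_mul_of_nonneg_right hrpp (hpos 1),
          mul_nonneg hc''0 (hpos 0),
          mul_nonneg (mul_nonneg hc''0 hpp) (hpos 1),
          mul_nonneg (mul_nonneg (add_nonneg hpp hc''0) hr0) (hpos 2)]
      · rw [if_pos (show 2 ≤ k+2 by omega), if_pos (show 1 ≤ k+2 by omega),
          if_pos (show 2 ≤ k+2+1 by omega), if_pos (show 1 ≤ k+2+1 by omega)]
        have e1 : k + 2 - 2 = k := by omega
        have e2 : k + 2 - 1 = k + 1 := by omega
        have e3 : k + 2 + 1 - 2 = k + 1 := by omega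
        have e4 : k + 2 + 1 - 1 = k + 2 := by omega
        rw [e1, e2, e3, e4]
        have hrk := hrec k (by omega)
        nlinarith [hrk, mul_le_mul_of_nonneg_right hrpp (hpos (k+2)),
          mul_nonneg hc''0 (hpos (k+1)),
          mul_nonneg (mul_nonneg hc''0 hpp) (hpos (k+2)),
          mul_nonneg (mul_nonneg (add_nonneg hpp hc''0) hr0) (hpos (k+3)),
          mul_nonneg hpp (hpos (k+2))]

lemma re_sum_nonpos (T : Multiset ℂ) (hT : ∀ x ∈ T, x.re ≤ 0) :
    (T.map Complex.re).sum ≤ 0 := by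
  induction T using Multiset.induction_on with
  | empty => simp
  | cons a s ihs =>
    rw [Multiset.map_cons, Multiset.sum_cons]
    have h1 := hT a (Multiset.mem_cons_self a s)
    have h2 := ihs (fun x hx => hT x (Multiset.mem_cons_of_mem hx))
    linarith

/-- A list of complex numbers is realizable if it is the spectrum (counted with
algebraic multiplicity) of an entrywise nonnegative real matrix. -/
def Realizable {n : ℕ} (l : Fin n → ℂ) : Prop :=
  ∃ A : Matrix (Fin n) (Fin n) ℝ, (∀ i j, 0 ≤ A i j) ∧
    (A.map (Complex.ofReal)).charpoly = ∏ i, (X - C (l i))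

/-- **Šmigoc's complex Suleimanova theorem.** Let `(λ_1, …, λ_n)` be closed under
complex conjugation with `λ_1` real, and suppose `Re λ_i ≤ 0` and
`|Im λ_i| ≤ √3 |Re λ_i|` for `i ≥ 2`. Then the list is realizable iff `∑ λ_i ≥ 0`
(the sum being real). -/
theorem smigoc_complex_suleimanova (n : ℕ) (hn : 0 < n) (l : Fin n → ℂ)
    (hconj : Multiset.map (starRingEnd ℂ) (Finset.univ.val.map l) = Finset.univ.val.map l)
    (h1 : (l ⟨0, hn⟩).im = 0)
    (h : ∀ i : Fin n, i ≠ ⟨0, hn⟩ →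
      (l i).re ≤ 0 ∧ |(l i).im| ≤ Real.sqrt 3 * |(l i).re|) :
    Realizable l ↔ 0 ≤ (∑ i, l i).re := by
  obtain ⟨m, rfl⟩ : ∃ m, n = m + 1 := ⟨n - 1, by omega⟩
  have h0 : (⟨0, hn⟩ : Fin (m+1)) = 0 := rfl
  rw [h0] at h1 h
  set T : Multiset ℂ := (univ : Finset (Fin m)).val.map (fun i => l i.succ) with hT
  have huniv : ((univ : Finset (Fin (m+1))).val.map l) = l 0 ::ₘ T := by
    rw [Fin.univ_succ, Finset.cons_val, Multiset.map_cons, Finset.map_val, Multiset.map_map]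
    rfl
  have hTsec : ∀ z ∈ T, z.re ≤ 0 ∧ |z.im| ≤ Real.sqrt 3 * |z.re| := by
    intro z hz
    obtain ⟨i, _, rfl⟩ := Multiset.mem_map.mp hz
    exact h i.succ (Fin.succ_ne_zero i)
  -- real part of the total sum
  have hsum_re : (∑ i, l i).re = (l 0).re + (T.map Complex.re).sum := by
    have e1 : (∑ i, l i) = l 0 + T.sum := by
      rw [Finset.sum_eq_multiset_sum]
      rw [huniv, Multiset.sum_cons]
    rw [e1, Complex.add_re]
    congr 1
    have := AddMonoidHom.map_multiset_sum Complex.reAddGroupHom T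
    simpa [Complex.coe_reAddGroupHom] using this
  constructor
  · -- realizable → nonnegative trace
    rintro ⟨A, hA, hchar⟩
    have htr := Matrix.trace_eq_neg_charpoly_coeff (A.map Complex.ofReal)
    rw [hchar] at htr
    have hcard : Fintype.card (Fin (m+1)) = m + 1 := Fintype.card_fin _
    have hcoeff : (∏ i : Fin (m+1), (X - C (l i))).coeff (Fintype.card (Fin (m+1)) - 1)
        = -∑ i, l i := by
      rw [hcard]
      have := prod_X_sub_C_coeff_card_pred (univ : Finset (Fin (m+1))) l (by simp)
      simpa using this
    rw [hcoeff, neg_neg] at htr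
    have htrA : (A.map Complex.ofReal).trace = ((A.trace : ℝ) : ℂ) := by
      simp [Matrix.trace, Matrix.diag, Matrix.map_apply]
    have htrnn : 0 ≤ A.trace := by
      apply Finset.sum_nonneg
      intro i _
      exact hA i i
    have : (∑ i, l i) = ((A.trace : ℝ) : ℂ) := by rw [← htr, htrA]
    rw [this]
    simpa using htrnn
  · -- sum nonneg → realizable
    intro hsum
    have hTconj : T.map (starRingEnd ℂ) = T := by
      rw [huniv, Multiset.map_cons, Complex.conj_eq_iff_im.mpr h1] at hconj
      exact (Multiset.cons_inj_right _).mp hconj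
    obtain ⟨q, hmon, hdeg, hmap, hpos, hrec⟩ := smigoc_key T hTconj hTsec
    have hcardT : Multiset.card T = m := by rw [hT]; simp
    rw [hcardT] at hdeg hrec
    set lam : ℝ := (l 0).re with hlam
    set c : ℝ := -(T.map Complex.re).sum with hc
    have hc0 : 0 ≤ c := by
      rw [hc, neg_nonneg]
      exact re_sum_nonpos T fun x hx => (hTsec x hx).1
    have hclam : c ≤ lam := by
      rw [hsum_re] at hsum
      rw [hc, hlam]; linarith
    have hlam0 : 0 ≤ lam := le_trans hc0 hclam
    set p : Polynomial ℝ := (X - C lam) * q with hp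
    have hpmon : p.Monic := (monic_X_sub_C lam).mul hmon
    have hpdeg : p.natDegree = m + 1 := by
      rw [hp, (monic_X_sub_C lam).natDegree_mul hmon, natDegree_X_sub_C, hdeg]; omega
    have hpmap : p.map Complex.ofRealHom = ∏ i : Fin (m+1), (X - C (l i)) := by
      rw [hp, Polynomial.map_mul, Polynomial.map_sub, map_X, map_C, hmap]
      rw [Fin.prod_univ_succ]
      congr 1
      · have hle : Complex.ofRealHom lam = l 0 := by
          apply Complex.ext <;> simp [hlam, h1]
        rw [hle]
      · rw [hT, Multiset.map_map, Finset.prod_eq_multiset_prod]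
        rfl
    have hpcoeff : ∀ j : ℕ, j < m + 1 → p.coeff j ≤ 0 := by
      intro j hj
      have hpe : p = q * X ^ 1 + C (-lam) * q := by rw [hp, map_neg]; ring
      rw [hpe, coeff_add, coeff_mul_X_pow', coeff_C_mul]
      rcases j with _ | k
      · simp only [show ¬ (1:ℕ) ≤ 0 by omega, if_false]
        have := hpos 0
        nlinarith
      · rw [if_pos (show 1 ≤ k+1 by omega)]
        simp only [Nat.add_sub_cancel]
        have hrk := hrec k (by omega)
        have := hpos (k+1)
        nlinarith
    refine ⟨companionMat (m+1) (fun i => -(p.coeff i)), ?_, ?_⟩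
    · intro i j
      unfold companionMat
      simp only [Matrix.of_apply]
      split_ifs
      · norm_num
      · have := hpcoeff i i.isLt
        linarith
      · exact le_refl 0
    · have hch : (companionMat (m+1) fun i : Fin (m+1) => -(p.coeff i)).charpoly = p := by
        rw [companionMat_charpoly]
        conv_rhs => rw [hpmon.as_sum, hpdeg]
        rw [← Fin.sum_univ_eq_sum_range (fun i => C (p.coeff i) * X ^ i) (m+1)]
        simp only [map_neg, neg_mul]
        rw [Finset.sum_neg_distrib, sub_neg_eq_add]
      have hmapA : (companionMat (m+1) fun i : Fin (m+1) => -(p.coeff i)).map Complex.ofReal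
          = (companionMat (m+1) fun i : Fin (m+1) => -(p.coeff i)).map Complex.ofRealHom := rfl
      rw [hmapA, Matrix.charpoly_map, hch, hpmap]
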